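/- arXiv:1009.0121 — 2 statements merged into one kernel-verified Lean document; each statement's English description precedes it below -/
import Mathlib

section
/- Let R be an algebraic complete idealic semiring (every element is a sup of compact elements, 1 is compact, and products of compact elements are compact), and let X = Spec R. An open subset U ⊆ X is quasi-compact if and only if U = D(a) := X \ V(a) for some compact element a of R. -/
open CompleteLattice

def IsPrimeElt {R : Type*} [LE R] [Mul R] [One R] (p : R) : Prop :=
  ¬ (1 : R) ≤ p ∧ ∀ a b : R, ¬ a ≤ p → ¬ b ≤ p → ¬ a * b ≤ p

def SpecT (R : Type*) [LE R] [Mul R] [One R] : Type _ := {p : R // IsPrimeElt p}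

instance (R : Type*) [LE R] [Mul R] [One R] : TopologicalSpace (SpecT R) :=
  TopologicalSpace.generateFrom {U : Set (SpecT R) | ∃ a : R, U = {p : SpecT R | ¬ a ≤ p.1}}

def Vset {R : Type*} [LE R] [Mul R] [One R] (a : R) : Set (SpecT R) :=
  {p : SpecT R | a ≤ p.1}

section Aux

variable {R : Type*} [CompleteLattice R] [CommMonoid R]

/-- The basic open set `D(a)`. -/
def Dset (a : R) : Set (SpecT R) := {p : SpecT R | ¬ a ≤ p.1}

lemma Dset_eq_compl (a : R) : Dset a = (Vset a)ᶜ := rfl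

lemma isOpen_Dset (a : R) : IsOpen (Dset a) :=
  TopologicalSpace.GenerateOpen.basic _ ⟨a, rfl⟩

lemma aux_mul_sup (hdist : ∀ (a : R) (S : Set R), a * sSup S = ⨆ b ∈ S, a * b)
    (a b c : R) : a * (b ⊔ c) = a * b ⊔ a * c := by
  have h := hdist a {b, c}
  rw [sSup_pair, iSup_pair] at h
  exact h

lemma aux_mul_le_mul_left (hdist : ∀ (a : R) (S : Set R), a * sSup S = ⨆ b ∈ S, a * b)
    (a : R) {b c : R} (h : b ≤ c) : a * b ≤ a * c := by
  have : a * c = a * b ⊔ a * c := by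
    rw [← aux_mul_sup hdist, sup_eq_right.mpr h]
  rw [this]; exact le_sup_left

lemma aux_mul_le_left (hdist : ∀ (a : R) (S : Set R), a * sSup S = ⨆ b ∈ S, a * b)
    (h1 : (1 : R) = ⊤) (a b : R) : a * b ≤ a := by
  have : a * b ≤ a * 1 := aux_mul_le_mul_left hdist a (h1 ▸ le_top)
  simpa using this

lemma aux_mul_le_right (hdist : ∀ (a : R) (S : Set R), a * sSup S = ⨆ b ∈ S, a * b)
    (h1 : (1 : R) = ⊤) (a b : R) : a * b ≤ b := by
  rw [mul_comm]; exact aux_mul_le_left hdist h1 b a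

/-- Every open set is, around each of its points, above a basic open set. -/
lemma open_basic (hdist : ∀ (a : R) (S : Set R), a * sSup S = ⨆ b ∈ S, a * b)
    (h1 : (1 : R) = ⊤) {U : Set (SpecT R)} (hU : IsOpen U) :
    ∀ p ∈ U, ∃ a : R, p ∈ Dset a ∧ Dset a ⊆ U := by
  have hU' : TopologicalSpace.GenerateOpen
      {U : Set (SpecT R) | ∃ a : R, U = {p : SpecT R | ¬ a ≤ p.1}} U := hU
  clear hU
  induction hU' with
  | basic V hV =>
    obtain ⟨a, rfl⟩ := hV
    exact fun p hp => ⟨a, hp, subset_rfl⟩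
  | univ =>
    intro p _
    refine ⟨1, ?_, Set.subset_univ _⟩
    exact p.2.1
  | inter V W hV hW ihV ihW =>
    rintro p ⟨hpV, hpW⟩
    obtain ⟨a, hpa, haV⟩ := ihV p hpV
    obtain ⟨b, hpb, hbW⟩ := ihW p hpW
    refine ⟨a * b, p.2.2 a b hpa hpb, fun q hq => ⟨haV ?_, hbW ?_⟩⟩
    · exact fun h => hq (le_trans (aux_mul_le_left hdist h1 a b) h)
    · exact fun h => hq (le_trans (aux_mul_le_right hdist h1 a b) h)
  | sUnion S hS ih =>
    rintro p ⟨V, hVS, hpV⟩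
    obtain ⟨a, hpa, haV⟩ := ih V hVS p hpV
    exact ⟨a, hpa, haV.trans (Set.subset_sUnion_of_mem hVS)⟩

lemma Dset_mono {a b : R} (h : a ≤ b) : Dset a ⊆ Dset b :=
  fun _ hq hb => hq (h.trans hb)

lemma pow_compact (_htop : IsCompactElement (1 : R))
    (hmulcpt : ∀ a b : R, IsCompactElement a → IsCompactElement b → IsCompactElement (a * b))
    {a : R} (ha : IsCompactElement a) (n : ℕ) : IsCompactElement (a ^ (n + 1)) := by
  induction n with
  | zero => simpa using ha
  | succ n ih =>
    rw [pow_succ]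
    exact hmulcpt _ _ ih ha

lemma not_le_pow {a : R} {p : SpecT R} (h : ¬ a ≤ p.1) (n : ℕ) : ¬ a ^ (n + 1) ≤ p.1 := by
  induction n with
  | zero => simpa using h
  | succ n ih =>
    rw [pow_succ]
    exact p.2.2 _ _ ih h

/-- Key Zorn-type lemma: if every prime above `s` is above the compact element `a`,
then some power of `a` is below `s`. -/
lemma radical_lemma (hdist : ∀ (a : R) (S : Set R), a * sSup S = ⨆ b ∈ S, a * b)
    (h1 : (1 : R) = ⊤)
    {a s : R} (ha : ∀ n : ℕ, IsCompactElement (a ^ (n + 1)))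
    (h : ∀ p : SpecT R, s ≤ p.1 → a ≤ p.1) : ∃ n : ℕ, a ^ (n + 1) ≤ s := by
  by_contra hcon
  push_neg at hcon
  set T : Set R := {x : R | s ≤ x ∧ ∀ n : ℕ, ¬ a ^ (n + 1) ≤ x} with hT
  have hchaincond : ∀ c ⊆ T, IsChain (· ≤ ·) c → ∀ y ∈ c, ∃ ub ∈ T, ∀ z ∈ c, z ≤ ub := by
    intro c hcT hchain y hy
    refine ⟨sSup c, ⟨(hcT hy).1.trans (le_sSup hy), ?_⟩, fun z hz => le_sSup hz⟩
    intro n hn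
    obtain ⟨x, hxc, hxle⟩ := (isCompactElement_iff_le_of_directed_sSup_le R _).mp (ha n)
      c ⟨y, hy⟩ hchain.directedOn hn
    exact (hcT hxc).2 n hxle
  obtain ⟨m, hsm, hmT, hmax⟩ := zorn_le_nonempty₀ T hchaincond s ⟨le_rfl, hcon⟩
  · -- m is prime
    have hm1 : ¬ (1 : R) ≤ m := by
      intro h1m
      have : m = ⊤ := top_le_iff.mp (h1 ▸ h1m)
      exact hmT.2 0 (this ▸ le_top)
    have key : ∀ x : R, ¬ x ≤ m → ∃ n : ℕ, a ^ (n + 1) ≤ m ⊔ x := by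
      intro x hx
      by_contra hxc
      push_neg at hxc
      have hmem : m ⊔ x ∈ T := ⟨hsm.trans le_sup_left, hxc⟩
      have := hmax hmem le_sup_left
      exact hx (le_sup_right.trans this)
    have hprime : ∀ x y : R, ¬ x ≤ m → ¬ y ≤ m → ¬ x * y ≤ m := by
      intro x y hx hy hxy
      obtain ⟨n, hn⟩ := key x hx
      obtain ⟨k, hk⟩ := key y hy
      have hle : a ^ (n + k + 1 + 1) ≤ (m ⊔ x) * (m ⊔ y) := by
        have he : n + k + 1 + 1 = (n + 1) + (k + 1) := by omega
        rw [he, pow_add]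
        calc a ^ (n + 1) * a ^ (k + 1) ≤ (m ⊔ x) * a ^ (k + 1) := by
              rw [mul_comm (a ^ (n+1)), mul_comm (m ⊔ x)]
              exact aux_mul_le_mul_left hdist _ hn
          _ ≤ (m ⊔ x) * (m ⊔ y) := aux_mul_le_mul_left hdist _ hk
      have hbound : (m ⊔ x) * (m ⊔ y) ≤ m := by
        calc (m ⊔ x) * (m ⊔ y) = (m ⊔ x) * m ⊔ (m ⊔ x) * y := aux_mul_sup hdist _ _ _
          _ ≤ m := by
            apply sup_le (aux_mul_le_right hdist h1 _ _)
            rw [mul_comm, aux_mul_sup hdist]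
            exact sup_le (aux_mul_le_right hdist h1 _ _)
              (by rw [mul_comm]; exact hxy)
      exact hmT.2 (n + k + 1) (hle.trans hbound)
    have ham := h ⟨m, hm1, hprime⟩ hmT.1
    have hpow : a ^ (0 + 1) ≤ m := by rw [pow_one]; exact ham
    exact hmT.2 0 hpow

end Aux

/-- Let `R` be an algebraic complete idealic semiring and `X = Spec R`.
An open `U ⊆ X` is quasi-compact iff `U = D(a) = X \ V(a)` for some compact `a ∈ R`. -/
theorem stmt14 {R : Type*} [CompleteLattice R] [CommMonoid R]
    (hdist : ∀ (a : R) (S : Set R), a * sSup S = ⨆ b ∈ S, a * b)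
    (h1 : (1 : R) = ⊤)
    (halg : ∀ a : R, a = sSup {x : R | IsCompactElement x ∧ x ≤ a})
    (htop : IsCompactElement (1 : R))
    (hmulcpt : ∀ a b : R, IsCompactElement a → IsCompactElement b → IsCompactElement (a * b))
    (U : Set (SpecT R)) (hU : IsOpen U) :
    IsCompact U ↔ ∃ a : R, IsCompactElement a ∧ U = (Vset a)ᶜ := by
  classical
  constructor
  · intro hc
    -- cover U by basic opens with compact elements
    set S : Set R := {c : R | IsCompactElement c ∧ Dset c ⊆ U} with hS
    have hcover : U ⊆ ⋃ c : S, Dset (c : R) := by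
      intro p hp
      obtain ⟨b, hpb, hbU⟩ := open_basic hdist h1 hU p hp
      have hb : ¬ sSup {x : R | IsCompactElement x ∧ x ≤ b} ≤ p.1 := by
        rw [← halg b]; exact hpb
      have : ∃ x ∈ {x : R | IsCompactElement x ∧ x ≤ b}, ¬ x ≤ p.1 := by
        by_contra hcon
        push_neg at hcon
        exact hb (sSup_le hcon)
      obtain ⟨x, ⟨hxc, hxb⟩, hxp⟩ := this
      have hxS : x ∈ S := ⟨hxc, (Dset_mono hxb).trans hbU⟩
      exact Set.mem_iUnion.mpr ⟨⟨x, hxS⟩, hxp⟩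
    obtain ⟨t, ht⟩ := hc.elim_finite_subcover (fun c : S => Dset (c : R))
      (fun c => isOpen_Dset _) hcover
    refine ⟨t.sup (fun c => (c : R)), isCompactElement_finsetSup t (fun c _ => c.2.1), ?_⟩
    rw [← Dset_eq_compl]
    apply Set.Subset.antisymm
    · intro p hp
      obtain ⟨c, hct, hpc⟩ := Set.mem_iUnion₂.mp (ht hp)
      exact fun hle => hpc ((Finset.le_sup hct).trans hle)
    · intro p hp
      have : ∃ c ∈ t, ¬ (c : R) ≤ p.1 := by
        by_contra hcon
        push_neg at hcon
        exact hp (Finset.sup_le hcon)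
      obtain ⟨c, _, hcp⟩ := this
      exact c.2.2 hcp
  · rintro ⟨a, ha, rfl⟩
    rw [← Dset_eq_compl]
    apply isCompact_of_finite_subcover
    intro ι W hW hcov
    set S : Set R := {c : R | IsCompactElement c ∧ ∃ i : ι, Dset c ⊆ W i} with hS
    have hrad : ∀ p : SpecT R, sSup S ≤ p.1 → a ≤ p.1 := by
      intro p hsp
      by_contra hap
      obtain ⟨i, hpi⟩ := Set.mem_iUnion.mp (hcov hap)
      obtain ⟨b, hpb, hbW⟩ := open_basic hdist h1 (hW i) p hpi
      have hb : ¬ sSup {x : R | IsCompactElement x ∧ x ≤ b} ≤ p.1 := by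
        rw [← halg b]; exact hpb
      have : ∃ x ∈ {x : R | IsCompactElement x ∧ x ≤ b}, ¬ x ≤ p.1 := by
        by_contra hcon
        push_neg at hcon
        exact hb (sSup_le hcon)
      obtain ⟨x, ⟨hxc, hxb⟩, hxp⟩ := this
      have hxS : x ∈ S := ⟨hxc, i, (Dset_mono hxb).trans hbW⟩
      exact hxp ((le_sSup hxS).trans hsp)
    obtain ⟨n, hn⟩ := radical_lemma hdist h1 (pow_compact htop hmulcpt ha) hrad
    obtain ⟨t, htS, htle⟩ := (isCompactElement_iff_exists_le_sSup_of_le_sSup R _).mp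
      (pow_compact htop hmulcpt ha n) S hn
    have hchoose : ∀ c ∈ t, ∃ i : ι, Dset c ⊆ W i := fun c hc => (htS hc).2
    refine ⟨t.attach.image (fun c => (hchoose c.1 c.2).choose), ?_⟩
    intro p hp
    have hpn : ¬ a ^ (n + 1) ≤ p.1 := not_le_pow hp n
    have : ∃ c ∈ t, ¬ c ≤ p.1 := by
      by_contra hcon
      push_neg at hcon
      exact hpn (htle.trans (by simpa using Finset.sup_le hcon))
    obtain ⟨c, hct, hcp⟩ := this
    refine Set.mem_iUnion₂.mpr ⟨(hchoose c hct).choose, ?_, (hchoose c hct).choose_spec hcp⟩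
    exact Finset.mem_image.mpr ⟨⟨c, hct⟩, Finset.mem_attach _ _, rfl⟩
end

section
/- Let R be an algebraic complete idealic semiring with idempotent multiplication (a·a = a for all a). Then for a, b ∈ R: V(a) ⊇ V(b) in Spec R implies a ≤ b. Consequently a ↦ V(a) is an order-isomorphism from R onto the lattice of closed subsets of Spec R. -/
open CompleteLattice

section Aux

variable {R : Type*} [CompleteLattice R] [CommMonoid R]

lemma aux_mul_mono (hdist : ∀ (a : R) (S : Set R), a * sSup S = ⨆ b ∈ S, a * b)
    {a b c : R} (h : b ≤ c) : a * b ≤ a * c := by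
  have h2 : sSup {b, c} = c := by rw [sSup_pair, sup_eq_right.mpr h]
  have := hdist a {b, c}
  rw [h2, iSup_pair] at this
  rw [this]; exact le_sup_left

lemma aux_exists_prime (hdist : ∀ (a : R) (S : Set R), a * sSup S = ⨆ b ∈ S, a * b)
    (h1 : (1 : R) = ⊤)
    (halg : ∀ a : R, a = sSup {x : R | IsCompactElement x ∧ x ≤ a})
    (hidem : ∀ a : R, a * a = a)
    {a b : R} (hab : ¬ a ≤ b) : ∃ p : R, IsPrimeElt p ∧ b ≤ p ∧ ¬ a ≤ p := by
  -- find a compact x ≤ a with ¬ x ≤ b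
  obtain ⟨x, ⟨hxc, hxa⟩, hxb⟩ : ∃ x : R, (IsCompactElement x ∧ x ≤ a) ∧ ¬ x ≤ b := by
    by_contra h
    push_neg at h
    exact hab (by rw [halg a]; exact sSup_le fun y hy => h y hy)
  -- Zorn
  set S : Set R := {c | b ≤ c ∧ ¬ x ≤ c} with hS
  obtain ⟨p, _, ⟨hbp, hxp⟩, hmax⟩ := zorn_le_nonempty₀ S (fun c hcS hc y hy => by
    refine ⟨sSup c, ⟨le_trans (hcS hy).1 (le_sSup hy), ?_⟩, fun z hz => le_sSup hz⟩
    intro hxs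
    obtain ⟨z, hzc, hxz⟩ := (isCompactElement_iff_le_of_directed_sSup_le R x).mp hxc c
      ⟨y, hy⟩ hc.directedOn hxs
    exact (hcS hzc).2 hxz) b ⟨le_rfl, hxb⟩
  refine ⟨p, ⟨?_, ?_⟩, hbp, fun hap => hxp (le_trans hxa hap)⟩
  · intro h1p
    exact hxp (le_trans le_top (h1 ▸ h1p))
  · intro u v hu hv huv
    have hxu : x ≤ p ⊔ u := by
      by_contra h
      exact hu (le_sup_right.trans (hmax ⟨le_trans hbp le_sup_left, h⟩ le_sup_left))
    have hxv : x ≤ p ⊔ v := by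
      by_contra h
      exact hv (le_sup_right.trans (hmax ⟨le_trans hbp le_sup_left, h⟩ le_sup_left))
    apply hxp
    calc x = x * x := (hidem x).symm
      _ ≤ (p ⊔ u) * (p ⊔ v) := le_trans (aux_mul_mono hdist hxv)
          (by rw [mul_comm x (p ⊔ v), mul_comm (p ⊔ u) (p ⊔ v)]
              exact aux_mul_mono hdist hxu)
      _ ≤ p := by
          rw [aux_mul_sup hdist, mul_comm (p ⊔ u) p, aux_mul_sup hdist,
            mul_comm (p ⊔ u) v, aux_mul_sup hdist]
          refine sup_le (sup_le ?_ ?_) (sup_le ?_ ?_)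
          · exact le_of_eq (hidem p)
          · exact aux_mul_le_left hdist h1 p u
          · rw [mul_comm v p]; exact aux_mul_le_left hdist h1 p v
          · rw [mul_comm v u]; exact huv

end Aux

/-- Let `R` be an algebraic complete idealic semiring with idempotent
multiplication. Then `V(b) ⊆ V(a)` implies `a ≤ b`, and consequently `a ↦ V(a)` is an
order-isomorphism from `R` onto the lattice of closed subsets of `Spec R` (ordered by
reverse inclusion). -/
theorem stmt17 {R : Type*} [CompleteLattice R] [CommMonoid R]
    (hdist : ∀ (a : R) (S : Set R), a * sSup S = ⨆ b ∈ S, a * b)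
    (h1 : (1 : R) = ⊤)
    (halg : ∀ a : R, a = sSup {x : R | IsCompactElement x ∧ x ≤ a})
    (htop : IsCompactElement (1 : R))
    (hmulcpt : ∀ a b : R, IsCompactElement a → IsCompactElement b → IsCompactElement (a * b))
    (hidem : ∀ a : R, a * a = a) :
    (∀ a b : R, Vset b ⊆ Vset a → a ≤ b) ∧
    ∃ e : R ≃o (TopologicalSpace.Closeds (SpecT R))ᵒᵈ,
      ∀ a : R, ((OrderDual.ofDual (e a) : TopologicalSpace.Closeds (SpecT R)) : Set (SpecT R))
        = Vset a := by
  classical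
  have hV : ∀ a b : R, Vset b ⊆ Vset a → a ≤ b := by
    intro a b h
    by_contra hab
    obtain ⟨p, hp, hbp, hap⟩ := aux_exists_prime hdist h1 halg hidem hab
    exact hap (h (show (⟨p, hp⟩ : SpecT R) ∈ Vset b from hbp))
  have hVanti : ∀ a b : R, a ≤ b → Vset b ⊆ Vset a := by
    intro a b hab p hp
    exact le_trans hab hp
  have hclosed : ∀ a : R, IsClosed (Vset a : Set (SpecT R)) := by
    intro a
    rw [← isOpen_compl_iff]
    apply TopologicalSpace.isOpen_generateFrom_of_mem
    exact ⟨a, rfl⟩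
  have hopen : ∀ U : Set (SpecT R), IsOpen U → ∃ a : R, U = {p : SpecT R | ¬ a ≤ p.1} := by
    intro U hU
    induction hU with
    | basic V hV => exact hV
    | univ =>
      refine ⟨1, ?_⟩
      ext p
      simp [p.2.1]
    | inter U V hU hV ihU ihV =>
      obtain ⟨a, rfl⟩ := ihU
      obtain ⟨b, rfl⟩ := ihV
      refine ⟨a * b, ?_⟩
      ext p
      simp only [Set.mem_inter_iff, Set.mem_setOf_eq]
      constructor
      · rintro ⟨ha, hb⟩
        exact p.2.2 a b ha hb
      · intro hab
        refine ⟨fun ha => hab (le_trans (aux_mul_le_left hdist h1 a b) ha),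
          fun hb => hab (le_trans ?_ hb)⟩
        rw [mul_comm]
        exact aux_mul_le_left hdist h1 b a
    | sUnion S hS ih =>
      refine ⟨sSup {c : R | {p : SpecT R | ¬ c ≤ p.1} ∈ S}, ?_⟩
      ext p
      simp only [Set.mem_sUnion, Set.mem_setOf_eq]
      constructor
      · rintro ⟨U, hUS, hpU⟩ hle
        obtain ⟨c, rfl⟩ := ih U hUS
        exact hpU (le_trans (le_sSup (show c ∈ _ from hUS)) hle)
      · intro hle
        obtain ⟨c, hcS, hcp⟩ : ∃ c ∈ {c : R | {p : SpecT R | ¬ c ≤ p.1} ∈ S}, ¬ c ≤ p.1 := by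
          by_contra h
          push_neg at h
          exact hle (sSup_le h)
        exact ⟨{p : SpecT R | ¬ c ≤ p.1}, hcS, hcp⟩
  set f : R → (TopologicalSpace.Closeds (SpecT R))ᵒᵈ :=
    fun a => OrderDual.toDual ⟨Vset a, hclosed a⟩ with hf
  have hinj : Function.Injective f := by
    intro a b hab
    have : Vset a = Vset b := congrArg (fun C => ((OrderDual.ofDual C :
      TopologicalSpace.Closeds (SpecT R)) : Set (SpecT R))) hab
    exact le_antisymm (hV a b (this ▸ subset_rfl)) (hV b a (this ▸ subset_rfl))
  have hsurjf : Function.Surjective f := by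
    intro C
    obtain ⟨a, ha⟩ := hopen ((OrderDual.ofDual C : TopologicalSpace.Closeds (SpecT R)) :
      Set (SpecT R))ᶜ (OrderDual.ofDual C).2.isOpen_compl
    refine ⟨a, ?_⟩
    have hC : ((OrderDual.ofDual C : TopologicalSpace.Closeds (SpecT R)) : Set (SpecT R))
        = Vset a := by
      have := congrArg compl ha
      rw [compl_compl] at this
      rw [this]
      ext p
      simp [Vset]
    exact OrderDual.ofDual.injective (TopologicalSpace.Closeds.ext hC.symm)
  have hbij : Function.Bijective f := ⟨hinj, hsurjf⟩
  refine ⟨hV, ⟨{ toEquiv := Equiv.ofBijective f hbij, map_rel_iff' := ?_ }, fun a => rfl⟩⟩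
  intro a b
  show f a ≤ f b ↔ a ≤ b
  constructor
  · intro h
    exact hV a b h
  · intro h
    exact hVanti a b h
end
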